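/- Let L ∈ 𝐋, V ∈ 𝐕(L) and t ∈ {1,…,T}. Then for every u ∈ [0,1] the matrix ((L+uV)ᵀL)_{t,t} is positive semidefinite, and for every u ∈ [0,1) one has rk(((L+uV)ᵀL)_{t,t}) = rk((LᵀL)_{t,t}). -/

import Mathlib

open Matrix Filter Topology

/-- Square matrices of size `dT × dT`, indexed by blocks: index `(t, i)` is
row/column `i` within block `t`. -/
abbrev Mat (d T : ℕ) := Matrix (Fin T × Fin d) (Fin T × Fin d) ℝ

/-- The `t`-th diagonal `d × d` block of a `dT × dT` matrix. -/
def blk {d T : ℕ} (A : Mat d T) (t : Fin T) : Matrix (Fin d) (Fin d) ℝ :=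
  fun i j => A (t, i) (t, j)

/-- The `t`-th block column of a `dT × dT` matrix, a `dT × d` matrix. -/
def colBlk {d T : ℕ} (A : Mat d T) (t : Fin T) : Matrix (Fin T × Fin d) (Fin d) ℝ :=
  fun p j => A p (t, j)

/-- Membership in `𝐋`: block lower triangular matrices. -/
def memL {d T : ℕ} (A : Mat d T) : Prop :=
  ∀ (t s : Fin T) (i j : Fin d), t < s → A (t, i) (s, j) = 0

/-- Membership in `𝐎`: block diagonal matrices with orthogonal `d × d` diagonal blocks
(equivalently: block diagonal and orthogonal). -/
def memO {d T : ℕ} (O : Mat d T) : Prop :=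
  (∀ (t s : Fin T) (i j : Fin d), t ≠ s → O (t, i) (s, j) = 0) ∧ Oᵀ * O = 1

/-- The Frobenius norm of a real matrix. -/
noncomputable def frobNorm {m n : Type*} [Fintype m] [Fintype n] (A : Matrix m n ℝ) : ℝ :=
  Real.sqrt (∑ i, ∑ j, (A i j) ^ 2)

/-- The Frobenius inner product of two real matrices. -/
noncomputable def frobInner {m n : Type*} [Fintype m] [Fintype n] (A B : Matrix m n ℝ) : ℝ :=
  ∑ i, ∑ j, A i j * B i j

/-- The adapted Bures–Wasserstein distance `d_ABW(L, M) = inf_{O ∈ 𝐎} ‖L - M O‖_F`. -/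
noncomputable def dABW {d T : ℕ} (L M : Mat d T) : ℝ :=
  sInf {r : ℝ | ∃ O : Mat d T, memO O ∧ r = frobNorm (L - M * O)}

/-- The set `𝐎*(L, M)` of optimizers of `inf_{O ∈ 𝐎} ‖L - M O‖_F`. -/
noncomputable def OStar {d T : ℕ} (L M : Mat d T) : Set (Mat d T) :=
  {O | memO O ∧ frobNorm (L - M * O) = dABW L M}

/-- The set `𝐕(L) = {M P - L : M ∈ 𝐋, P ∈ 𝐎*(L, M)}`. -/
noncomputable def VSet {d T : ℕ} (L : Mat d T) : Set (Mat d T) :=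
  {V | ∃ M P : Mat d T, memL M ∧ P ∈ OStar L M ∧ V = M * P - L}

/-- The set `𝒱(L) = {V ∈ 𝐋 : (Vᵀ L)_{t,t} is symmetric for all t}`. -/
def calV {d T : ℕ} (L : Mat d T) : Set (Mat d T) :=
  {V | memL V ∧ ∀ t : Fin T, (blk (Vᵀ * L) t).IsSymm}

/-- The set `𝐋^reg = {L ∈ 𝐋 : (Lᵀ L)_{t,t} is positive definite for all t}`. -/
def LReg {d T : ℕ} : Set (Mat d T) :=
  {L | memL L ∧ ∀ t : Fin T, (blk (Lᵀ * L) t).PosDef}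

/-- The sum of the singular values of a real square matrix `A`,
i.e. the trace of the positive semidefinite square root of `Aᵀ A`. -/
noncomputable def svSum {n : ℕ} (A : Matrix (Fin n) (Fin n) ℝ) : ℝ :=
  ((Matrix.posSemidef_conjTranspose_mul_self A).1.eigenvectorUnitary.1 *
    diagonal (Real.sqrt ∘ (Matrix.posSemidef_conjTranspose_mul_self A).1.eigenvalues) *
    (star (Matrix.posSemidef_conjTranspose_mul_self A).1.eigenvectorUnitary :
      Matrix (Fin n) (Fin n) ℝ)).trace

/-- The operator norm of a real matrix: the supremum of the euclidean norm `‖A x‖₂`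
over the euclidean unit ball. -/
noncomputable def opNorm {m n : Type*} [Fintype m] [Fintype n] (A : Matrix m n ℝ) : ℝ :=
  sSup {r : ℝ | ∃ x : n → ℝ, (∑ j, (x j) ^ 2) ≤ 1 ∧ r = Real.sqrt (∑ i, (A.mulVec x i) ^ 2)}


section AuxStmt6
set_option maxHeartbeats 1000000
open Finset
set_option linter.unusedSectionVars false
set_option linter.unusedVariables false

variable {n : Type*} [Fintype n] [DecidableEq n]


lemma ssq_eq_trace {m : Type*} [Fintype m] (E : Matrix m n ℝ) :
    ∑ i, ∑ j, (E i j)^2 = (Eᵀ * E).trace := by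
  simp only [Matrix.trace, Matrix.diag, mul_apply, transpose_apply, sq]
  rw [Finset.sum_comm]

lemma inner_eq_trace {m : Type*} [Fintype m] (E F : Matrix m n ℝ) :
    ∑ i, ∑ j, E i j * F i j = (Fᵀ * E).trace := by
  simp only [Matrix.trace, Matrix.diag, mul_apply, transpose_apply]
  rw [Finset.sum_comm]
  exact Finset.sum_congr rfl fun i _ => Finset.sum_congr rfl fun j _ => mul_comm _ _

lemma sum_sq_sub {m : Type*} [Fintype m] (E F : Matrix m n ℝ) :
    ∑ i, ∑ j, (E i j - F i j)^2
      = (∑ i, ∑ j, (E i j)^2) - 2 * (Fᵀ * E).trace + ∑ i, ∑ j, (F i j)^2 := by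
  rw [← inner_eq_trace]
  rw [Finset.mul_sum]
  simp_rw [Finset.mul_sum]
  rw [← Finset.sum_sub_distrib, ← Finset.sum_add_distrib]
  refine Finset.sum_congr rfl fun i _ => ?_
  rw [← Finset.sum_sub_distrib, ← Finset.sum_add_distrib]
  exact Finset.sum_congr rfl fun j _ => by ring

lemma ssq_mul_orth {m : Type*} [Fintype m] (E : Matrix m n ℝ) (Q : Matrix n n ℝ)
    (hQ : Qᵀ * Q = 1) :
    ∑ i, ∑ j, ((E * Q) i j)^2 = ∑ i, ∑ j, (E i j)^2 := by
  rw [ssq_eq_trace, ssq_eq_trace, transpose_mul]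
  have hQQ : Q * Qᵀ = 1 := mul_eq_one_comm.mp hQ
  calc (Qᵀ * Eᵀ * (E * Q)).trace = ((Qᵀ * (Eᵀ * E)) * Q).trace := by
        rw [Matrix.mul_assoc, Matrix.mul_assoc, Matrix.mul_assoc]
    _ = (Q * (Qᵀ * (Eᵀ * E))).trace := trace_mul_comm _ _
    _ = (Eᵀ * E).trace := by rw [← Matrix.mul_assoc, hQQ, Matrix.one_mul]

lemma trace_vecMulVec_mul (x y : n → ℝ) (B : Matrix n n ℝ) :
    (vecMulVec x y * B).trace = y ⬝ᵥ B.mulVec x := by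
  simp only [Matrix.trace, Matrix.diag, mul_apply, vecMulVec_apply, dotProduct, mulVec]
  rw [Finset.sum_comm]
  refine Finset.sum_congr rfl fun k _ => ?_
  rw [Finset.mul_sum]
  exact Finset.sum_congr rfl fun i _ => by ring

lemma vecMulVec_mul_vecMulVec (x y z w : n → ℝ) :
    vecMulVec x y * vecMulVec z w = (y ⬝ᵥ z) • vecMulVec x w := by
  ext i j
  simp only [mul_apply, vecMulVec_apply, Matrix.smul_apply, smul_eq_mul, dotProduct]
  rw [Finset.sum_mul]
  exact Finset.sum_congr rfl fun k _ => by ring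

/-- Householder reflection is orthogonal. -/
lemma householder_orth (x : n → ℝ) (hx : x ⬝ᵥ x = 1) :
    (1 - (2:ℝ) • vecMulVec x x)ᵀ * (1 - (2:ℝ) • vecMulVec x x) = 1 := by
  have hsym : (vecMulVec x x)ᵀ = vecMulVec x x := by ext i j; simp [vecMulVec_apply, mul_comm]
  have key : vecMulVec x x * vecMulVec x x = vecMulVec x x := by
    rw [_root_.vecMulVec_mul_vecMulVec, hx, one_smul]
  rw [transpose_sub, transpose_smul, hsym, transpose_one]
  rw [Matrix.sub_mul, Matrix.mul_sub, Matrix.mul_sub]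
  simp only [Matrix.one_mul, Matrix.mul_one]
  rw [smul_mul_assoc, mul_smul_comm, key]
  module








lemma dp_self_nonneg (x : n → ℝ) : 0 ≤ x ⬝ᵥ x :=
  Finset.sum_nonneg fun i _ => mul_self_nonneg _

lemma householder_symm (x : n → ℝ) :
    (1 - (2:ℝ) • vecMulVec x x)ᵀ = 1 - (2:ℝ) • vecMulVec x x := by
  rw [transpose_sub, transpose_one, transpose_smul]
  congr 1
  ext i j
  simp [vecMulVec_apply, mul_comm]

/-- PSD quadratic form from the trace-optimality property. -/
lemma psd_of_trace_opt (B : Matrix n n ℝ)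
    (h : ∀ Q : Matrix n n ℝ, Qᵀ * Q = 1 → (Qᵀ * B).trace ≤ B.trace) (x : n → ℝ) :
    0 ≤ x ⬝ᵥ B.mulVec x := by
  rcases eq_or_ne x 0 with rfl | hx
  · simp
  have hxx : 0 < x ⬝ᵥ x := by
    rcases (dp_self_nonneg x).lt_or_eq with h' | h'
    · exact h'
    · exact absurd ((dotProduct_self_eq_zero).mp h'.symm) hx
  set y : n → ℝ := (Real.sqrt (x ⬝ᵥ x))⁻¹ • x with hy
  have hyy : y ⬝ᵥ y = 1 := by
    rw [hy, smul_dotProduct, dotProduct_smul, smul_eq_mul, smul_eq_mul, ← mul_assoc,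
      ← mul_inv, Real.mul_self_sqrt hxx.le]
    exact inv_mul_cancel₀ hxx.ne'
  have hQ := householder_orth y hyy
  have hineq := h _ hQ
  rw [householder_symm, Matrix.sub_mul, Matrix.one_mul, smul_mul_assoc, trace_sub,
    trace_smul, trace_vecMulVec_mul] at hineq
  have hyB : 0 ≤ y ⬝ᵥ B.mulVec y := by
    simp only [smul_eq_mul] at hineq; linarith
  have hre : y ⬝ᵥ B.mulVec y = ((Real.sqrt (x ⬝ᵥ x))⁻¹)^2 * (x ⬝ᵥ B.mulVec x) := by
    simp only [hy, dotProduct_smul, smul_dotProduct, smul_eq_mul, mulVec_smul]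
    ring
  rw [hre] at hyB
  have hs : Real.sqrt (x ⬝ᵥ x) ≠ 0 := by positivity
  have h2 : (0:ℝ) < ((Real.sqrt (x ⬝ᵥ x))⁻¹)^2 := by positivity
  nlinarith

/-- Symmetry from the trace-optimality property. -/
lemma symm_of_trace_opt (B : Matrix n n ℝ)
    (h : ∀ Q : Matrix n n ℝ, Qᵀ * Q = 1 → (Qᵀ * B).trace ≤ B.trace) : Bᵀ = B := by
  have key : ∀ x y : n → ℝ, x ⬝ᵥ x = 1 → y ⬝ᵥ y = 1 →
      -2 * (x ⬝ᵥ B.mulVec x) - 2 * (y ⬝ᵥ B.mulVec y)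
        + 4 * (y ⬝ᵥ x) * (x ⬝ᵥ B.mulVec y) ≤ 0 := by
    intro x y hx hy
    set Qx : Matrix n n ℝ := 1 - (2:ℝ) • vecMulVec x x with hQx
    set Qy : Matrix n n ℝ := 1 - (2:ℝ) • vecMulVec y y with hQy
    have hOx := householder_orth x hx
    have hOy := householder_orth y hy
    have hQ : (Qx * Qy)ᵀ * (Qx * Qy) = 1 := by
      rw [transpose_mul, Matrix.mul_assoc, ← Matrix.mul_assoc Qxᵀ, hOx,
        Matrix.one_mul, hOy]
    have hineq := h _ hQ
    have e0 : (Qx * Qy)ᵀ * B = Qy * (Qx * B) := by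
      rw [transpose_mul, householder_symm, householder_symm, Matrix.mul_assoc]
    have e1 : Qx * B = B - (2:ℝ) • (vecMulVec x x * B) := by
      rw [hQx, Matrix.sub_mul, Matrix.one_mul, smul_mul_assoc]
    have e3 : vecMulVec y y * (Qx * B)
        = vecMulVec y y * B - (2:ℝ) • ((y ⬝ᵥ x) • (vecMulVec y x * B)) := by
      rw [e1, Matrix.mul_sub, mul_smul_comm, ← Matrix.mul_assoc,
        _root_.vecMulVec_mul_vecMulVec, smul_mul_assoc]
    have e2 : Qy * (Qx * B) = (Qx * B) - (2:ℝ) • (vecMulVec y y * (Qx * B)) := by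
      rw [hQy, Matrix.sub_mul, Matrix.one_mul, smul_mul_assoc]
    rw [e0, e2, e3, e1] at hineq
    rw [trace_sub, trace_smul, trace_sub, trace_smul, trace_sub, trace_smul, trace_smul,
      trace_vecMulVec_mul, trace_vecMulVec_mul, trace_vecMulVec_mul] at hineq
    simp only [smul_eq_mul] at hineq
    linarith
  ext i j
  simp only [transpose_apply]
  rcases eq_or_ne i j with rfl | hij
  · rfl
  set δ : ℝ := B i j - B j i with hδ
  set K : ℝ := B i i + B j j with hK
  have hg : ∀ θ : ℝ, 2 * Real.sin θ * Real.cos θ * δ - 2 * (Real.sin θ)^2 * K ≤ 0 := by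
    intro θ
    set x : n → ℝ := Pi.single i 1 with hxdef
    set y : n → ℝ := Real.cos θ • (Pi.single i 1 : n → ℝ) + Real.sin θ • (Pi.single j 1 : n → ℝ) with hydef
    have hcs := Real.sin_sq_add_cos_sq θ
    have hx : x ⬝ᵥ x = 1 := by simp [hxdef]
    have hy : y ⬝ᵥ y = 1 := by
      rw [hydef]
      simp [dotProduct_add, add_dotProduct, dotProduct_smul, smul_dotProduct,
        single_dotProduct, Pi.single_apply, hij, Ne.symm hij]
      nlinarith [hcs]
    have hkxy := key x y hx hy
    have hyx : y ⬝ᵥ x = Real.cos θ := by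
      rw [hxdef, hydef]
      simp [add_dotProduct, smul_dotProduct, single_dotProduct,
        Pi.single_apply, hij, Ne.symm hij]
    have hmv : ∀ (a b : n), Pi.single a (1:ℝ) ⬝ᵥ B.mulVec (Pi.single b 1) = B a b := by
      intro a b
      simp [Matrix.mulVec_single, single_dotProduct]
    have hxBx : x ⬝ᵥ B.mulVec x = B i i := hmv i i
    have hyBy : y ⬝ᵥ B.mulVec y = (Real.cos θ)^2 * B i i
        + Real.cos θ * Real.sin θ * (B i j + B j i) + (Real.sin θ)^2 * B j j := by
      rw [hydef]
      simp only [mulVec_add, mulVec_smul, dotProduct_add, add_dotProduct,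
        dotProduct_smul, smul_dotProduct, smul_eq_mul, Pi.smul_apply]
      rw [hmv i i, hmv i j, hmv j i, hmv j j]
      ring
    have hxBy : x ⬝ᵥ B.mulVec y = Real.cos θ * B i i + Real.sin θ * B i j := by
      rw [hxdef, hydef]
      simp only [mulVec_add, mulVec_smul, dotProduct_add, dotProduct_smul, smul_eq_mul]
      rw [hmv i i, hmv i j]
    rw [hxBx, hyBy, hxBy, hyx] at hkxy
    calc 2 * Real.sin θ * Real.cos θ * δ - 2 * (Real.sin θ)^2 * K
        = (-2 * B i i - 2 * ((Real.cos θ)^2 * B i i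
            + Real.cos θ * Real.sin θ * (B i j + B j i) + (Real.sin θ)^2 * B j j)
            + 4 * Real.cos θ * (Real.cos θ * B i i + Real.sin θ * B i j))
          - 2 * B i i * ((Real.sin θ)^2 + (Real.cos θ)^2 - 1) := by
          rw [hδ, hK]; ring
      _ = (-2 * B i i - 2 * ((Real.cos θ)^2 * B i i
            + Real.cos θ * Real.sin θ * (B i j + B j i) + (Real.sin θ)^2 * B j j)
            + 4 * Real.cos θ * (Real.cos θ * B i i + Real.sin θ * B i j)) := by
          rw [hcs]; ring
      _ ≤ 0 := hkxy
  have hmax : IsLocalMax (fun θ : ℝ => 2 * Real.sin θ * Real.cos θ * δ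
      - 2 * (Real.sin θ)^2 * K) 0 := by
    apply Filter.Eventually.of_forall
    intro θ
    simp only
    calc 2 * Real.sin θ * Real.cos θ * δ - 2 * Real.sin θ ^ 2 * K ≤ 0 := hg θ
      _ = 2 * Real.sin 0 * Real.cos 0 * δ - 2 * Real.sin 0 ^ 2 * K := by simp
  have hder : HasDerivAt (fun θ : ℝ => 2 * Real.sin θ * Real.cos θ * δ
      - 2 * (Real.sin θ)^2 * K) (2 * δ) 0 := by
    have hs := Real.hasDerivAt_sin 0
    have hc := Real.hasDerivAt_cos 0
    have h1 := ((hs.const_mul (2:ℝ)).mul hc).mul_const δ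
    have h2 := ((hs.pow 2).const_mul (2:ℝ)).mul_const K
    have h12 := h1.sub h2
    exact h12.congr_deriv (by simp)
  have h0 := hmax.deriv_eq_zero
  rw [hder.deriv] at h0
  have hδ0 : δ = 0 := by linarith
  rw [hδ] at hδ0
  linarith

lemma rank_eq_of_ker_eq (A B : Matrix n n ℝ)
    (h : LinearMap.ker A.mulVecLin = LinearMap.ker B.mulVecLin) : A.rank = B.rank := by
  have hA := LinearMap.finrank_range_add_finrank_ker A.mulVecLin
  have hB := LinearMap.finrank_range_add_finrank_ker B.mulVecLin
  rw [h] at hA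
  rw [Matrix.rank, Matrix.rank]
  omega
lemma sum_block {T d : ℕ} (t : Fin T) (f : Fin T × Fin d → ℝ)
    (hf : ∀ r : Fin T × Fin d, r.1 ≠ t → f r = 0) : ∑ r, f r = ∑ k, f (t, k) := by
  rw [Fintype.sum_prod_type]
  exact Finset.sum_eq_single t
    (fun s _ hs => Finset.sum_eq_zero fun k _ => hf (s, k) hs)
    (fun h => absurd (Finset.mem_univ t) h)


end AuxStmt6

set_option maxHeartbeats 1000000 in
/-- for `V ∈ 𝐕(L)` and each `t`, the matrix `((L+uV)ᵀ L)_{t,t}` is positive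
semidefinite for `u ∈ [0,1]`, and has the same rank as `(Lᵀ L)_{t,t}` for `u ∈ [0,1)`. -/
theorem stmt6 (d T : ℕ) (hd : 0 < d) (hT : 0 < T) (L V : Mat d T)
    (hL : memL L) (hV : V ∈ VSet L) (t : Fin T) :
    (∀ u : ℝ, u ∈ Set.Icc (0 : ℝ) 1 → (blk ((L + u • V)ᵀ * L) t).PosSemidef) ∧
    (∀ u : ℝ, u ∈ Set.Ico (0 : ℝ) 1 →
      (blk ((L + u • V)ᵀ * L) t).rank = (blk (Lᵀ * L) t).rank) := by
  obtain ⟨M, P, hM, ⟨⟨hPbd, hPorth⟩, hPopt⟩, hVeq⟩ := hV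
  set C := colBlk M t with hC
  set D := colBlk L t with hD
  set Pt := blk P t with hPt
  set B := (C * Pt)ᵀ * D with hBdef
  set G := Dᵀ * D with hGdef
  -- basic block identities
  have hMP : ∀ (p : Fin T × Fin d) (j : Fin d), (M * P) p (t, j) = (C * Pt) p j := by
    intro p j
    rw [Matrix.mul_apply, Matrix.mul_apply,
      sum_block t (fun r => M p r * P r (t, j))
        (fun r hr => mul_eq_zero_of_right _ (hPbd r.1 t r.2 j hr))]
    rfl
  have hPtorth : Ptᵀ * Pt = 1 := by
    ext i j
    have h1 : (Pᵀ * P) (t, i) (t, j) = (1 : Mat d T) (t, i) (t, j) := by rw [hPorth]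
    rw [Matrix.mul_apply] at h1
    simp only [transpose_apply] at h1
    rw [sum_block t (fun r => P r (t, i) * P r (t, j))
      (fun r hr => mul_eq_zero_of_left (hPbd r.1 t r.2 i hr) _)] at h1
    calc (Ptᵀ * Pt) i j = ∑ k, P (t, k) (t, i) * P (t, k) (t, j) := by
          rw [Matrix.mul_apply]; rfl
      _ = (1 : Mat d T) (t, i) (t, j) := h1
      _ = (1 : Matrix (Fin d) (Fin d) ℝ) i j := by
          simp [Matrix.one_apply, Prod.ext_iff]
  have hGblk : blk (Lᵀ * L) t = G := by
    ext i j
    rw [hGdef, Matrix.mul_apply]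
    rw [show blk (Lᵀ * L) t i j = ∑ p, L p (t, i) * L p (t, j) from by
      rw [blk, Matrix.mul_apply]; rfl]
    rfl
  have hblk : ∀ u : ℝ, blk ((L + u • V)ᵀ * L) t = (1 - u) • G + u • B := by
    intro u
    ext i j
    have hGij : G i j = ∑ p, L p (t, i) * L p (t, j) := by
      rw [hGdef, Matrix.mul_apply]; rfl
    have hBij : B i j = ∑ p, (C * Pt) p i * L p (t, j) := by
      rw [hBdef, Matrix.mul_apply]; rfl
    have hlhs : blk ((L + u • V)ᵀ * L) t i j
        = ∑ p, (L p (t, i) + u * V p (t, i)) * L p (t, j) := by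
      rw [blk, Matrix.mul_apply]
      rfl
    rw [hlhs]
    rw [Matrix.add_apply, Matrix.smul_apply, Matrix.smul_apply, smul_eq_mul, smul_eq_mul,
      hGij, hBij, Finset.mul_sum, Finset.mul_sum, ← Finset.sum_add_distrib]
    refine Finset.sum_congr rfl fun p _ => ?_
    have hVp : V p (t, i) = (C * Pt) p i - L p (t, i) := by
      rw [hVeq, Matrix.sub_apply, hMP p i]
    rw [hVp]; ring
  -- the key trace inequality
  have hkey : ∀ Q : Matrix (Fin d) (Fin d) ℝ, Qᵀ * Q = 1 → (Qᵀ * B).trace ≤ B.trace := by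
    intro Q hQ
    set O' : Mat d T := fun p q =>
      if q.1 = t then (if p.1 = t then (Pt * Q) p.2 q.2 else 0) else P p q with hO'
    have hPtQ : (Pt * Q)ᵀ * (Pt * Q) = 1 := by
      rw [transpose_mul, Matrix.mul_assoc, ← Matrix.mul_assoc Ptᵀ, hPtorth,
        Matrix.one_mul, hQ]
    have hO'app : ∀ (p q : Fin T × Fin d), O' p q
        = if q.1 = t then (if p.1 = t then (Pt * Q) p.2 q.2 else 0) else P p q :=
      fun p q => rfl
    have hO'bd : ∀ (s s' : Fin T) (i j : Fin d), s ≠ s' → O' (s, i) (s', j) = 0 := by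
      intro s s' i j hss'
      by_cases h : s' = t
      · have h1 : O' (s, i) (s', j)
            = if s' = t then (if s = t then (Pt * Q) i j else 0) else P (s, i) (s', j) := rfl
        rw [h1, if_pos h, if_neg (fun hh : s = t => hss' (hh.trans h.symm))]
      · have h1 : O' (s, i) (s', j)
            = if s' = t then (if s = t then (Pt * Q) i j else 0) else P (s, i) (s', j) := rfl
        rw [h1, if_neg h]
        exact hPbd s s' i j hss'
    have hO'entry : ∀ (r : Fin T × Fin d) (s : Fin T) (i : Fin d), O' r (s, i)
        = if s = t then (if r.1 = t then (Pt * Q) r.2 i else 0) else P r (s, i) :=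
      fun r s i => rfl
    have hO'orth : O'ᵀ * O' = 1 := by
      ext p q
      obtain ⟨s, i⟩ := p
      obtain ⟨s', j⟩ := q
      rw [Matrix.mul_apply]
      simp only [transpose_apply]
      by_cases hs : s = t <;> by_cases hs' : s' = t
      · rw [sum_block t (fun r => O' r (s, i) * O' r (s', j))
          (fun r hr => by
            show O' r (s, i) * O' r (s', j) = 0
            rw [hO'entry, if_pos hs, if_neg hr, zero_mul])]
        have hE : ∀ (k : Fin d) (s₀ : Fin T) (i₀ : Fin d), s₀ = t →
            O' (t, k) (s₀, i₀) = (Pt * Q) k i₀ := by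
          intro k s₀ i₀ h₀
          rw [hO'entry, if_pos h₀, if_pos rfl]
        have hss' : s = s' := hs.trans hs'.symm
        calc ∑ k, O' (t, k) (s, i) * O' (t, k) (s', j)
            = ∑ k, (Pt * Q) k i * (Pt * Q) k j :=
              Finset.sum_congr rfl fun k _ => by rw [hE k s i hs, hE k s' j hs']
          _ = ((Pt * Q)ᵀ * (Pt * Q)) i j := by rw [Matrix.mul_apply]; rfl
          _ = (1 : Matrix (Fin d) (Fin d) ℝ) i j := by rw [hPtQ]
          _ = (1 : Mat d T) (s, i) (s', j) := by
              simp [Matrix.one_apply, Prod.ext_iff, hss']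
      · rw [Finset.sum_eq_zero (fun r _ => ?_)]
        · have hne : s ≠ s' := fun h => hs' (h.symm.trans hs)
          symm
          simp [Matrix.one_apply, Prod.ext_iff, hne]
        · by_cases hr : r.1 = t
          · have h1 : O' r (s', j) = P r (s', j) := by rw [hO'entry, if_neg hs']
            have h2 : P r (s', j) = 0 := by
              refine hPbd r.1 s' r.2 j ?_
              rw [hr]; exact fun h => hs' h.symm
            rw [h1, h2, mul_zero]
          · have h0 : O' r (s, i) = 0 := by rw [hO'entry, if_pos hs, if_neg hr]
            rw [h0, zero_mul]
      · rw [Finset.sum_eq_zero (fun r _ => ?_)]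
        · have hne : s ≠ s' := fun h => hs (h.trans hs')
          symm
          simp [Matrix.one_apply, Prod.ext_iff, hne]
        · by_cases hr : r.1 = t
          · have h1 : O' r (s, i) = P r (s, i) := by rw [hO'entry, if_neg hs]
            have h2 : P r (s, i) = 0 := by
              refine hPbd r.1 s r.2 i ?_
              rw [hr]; exact fun h => hs h.symm
            rw [h1, h2, zero_mul]
          · have h0 : O' r (s', j) = 0 := by rw [hO'entry, if_pos hs', if_neg hr]
            rw [h0, mul_zero]
      · have h1 : ∀ r, O' r (s, i) = P r (s, i) := fun r => by
          rw [hO'entry, if_neg hs]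
        have h2 : ∀ r, O' r (s', j) = P r (s', j) := fun r => by
          rw [hO'entry, if_neg hs']
        calc ∑ r, O' r (s, i) * O' r (s', j) = ∑ r, P r (s, i) * P r (s', j) :=
              Finset.sum_congr rfl fun r _ => by rw [h1 r, h2 r]
          _ = (Pᵀ * P) (s, i) (s', j) := by rw [Matrix.mul_apply]; rfl
          _ = (1 : Mat d T) (s, i) (s', j) := by rw [hPorth]
    have hmemO' : memO O' := ⟨hO'bd, hO'orth⟩
    have hle : frobNorm (L - M * P) ≤ frobNorm (L - M * O') := by
      rw [hPopt]
      apply csInf_le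
      · refine ⟨0, fun r hr => ?_⟩
        obtain ⟨O, _, rfl⟩ := hr
        exact Real.sqrt_nonneg _
      · exact ⟨O', hmemO', rfl⟩
    have hssq : (∑ p, ∑ q, ((L - M * P) p q)^2) ≤ ∑ p, ∑ q, ((L - M * O') p q)^2 := by
      have ha : (0:ℝ) ≤ ∑ p, ∑ q, ((L - M * P) p q)^2 :=
        Finset.sum_nonneg fun p _ => Finset.sum_nonneg fun q _ => sq_nonneg _
      have hb : (0:ℝ) ≤ ∑ p, ∑ q, ((L - M * O') p q)^2 :=
        Finset.sum_nonneg fun p _ => Finset.sum_nonneg fun q _ => sq_nonneg _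
      have h1 : Real.sqrt (∑ p, ∑ q, ((L - M * P) p q)^2)
          ≤ Real.sqrt (∑ p, ∑ q, ((L - M * O') p q)^2) := hle
      calc (∑ p, ∑ q, ((L - M * P) p q)^2)
          = Real.sqrt (∑ p, ∑ q, ((L - M * P) p q)^2) ^ 2 := (Real.sq_sqrt ha).symm
        _ ≤ Real.sqrt (∑ p, ∑ q, ((L - M * O') p q)^2) ^ 2 := by
            gcongr
        _ = ∑ p, ∑ q, ((L - M * O') p q)^2 := Real.sq_sqrt hb
    have hdec : ∀ X : Mat d T, (∑ p, ∑ q, (X p q)^2)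
        = (∑ p, ∑ j, (X p (t, j))^2)
          + ∑ p, ∑ s ∈ Finset.univ.erase t, ∑ j, (X p (s, j))^2 := by
      intro X
      rw [← Finset.sum_add_distrib]
      refine Finset.sum_congr rfl fun p _ => ?_
      rw [Fintype.sum_prod_type]
      exact (Finset.add_sum_erase _ (fun s => ∑ j, (X p (s, j))^2) (Finset.mem_univ t)).symm
    have hMO' : ∀ (p : Fin T × Fin d) (j : Fin d),
        (M * O') p (t, j) = ((C * Pt) * Q) p j := by
      intro p j
      rw [Matrix.mul_apply,
        sum_block t (fun r => M p r * O' r (t, j))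
          (fun r hr => by
            have h0 : O' r (t, j) = 0 := by rw [hO'entry, if_pos rfl, if_neg hr]
            exact mul_eq_zero_of_right _ h0)]
      have hE : ∀ k : Fin d, O' (t, k) (t, j) = (Pt * Q) k j := fun k => by
        rw [hO'entry, if_pos rfl, if_pos rfl]
      calc ∑ k, M p (t, k) * O' (t, k) (t, j) = ∑ k, C p k * (Pt * Q) k j :=
            Finset.sum_congr rfl fun k _ => by rw [hE k]; rfl
        _ = (C * (Pt * Q)) p j := (Matrix.mul_apply).symm
        _ = ((C * Pt) * Q) p j := by rw [Matrix.mul_assoc]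
    have hMO'ne : ∀ (p q : Fin T × Fin d), q.1 ≠ t → (M * O') p q = (M * P) p q := by
      intro p q hq
      rw [Matrix.mul_apply, Matrix.mul_apply]
      refine Finset.sum_congr rfl fun r _ => ?_
      have h1 : O' r q = P r q := by
        have h2 : O' r q = if q.1 = t then (if r.1 = t then (Pt * Q) r.2 q.2 else 0)
            else P r q := rfl
        rw [h2, if_neg hq]
      rw [h1]
    have e1 : (∑ p, ∑ q, ((L - M * O') p q)^2)
        = (∑ p, ∑ j, (D p j - ((C * Pt) * Q) p j)^2)
          + ∑ p, ∑ s ∈ Finset.univ.erase t, ∑ j, ((L - M * P) p (s, j))^2 := by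
      rw [hdec]
      congr 1
      · refine Finset.sum_congr rfl fun p _ => Finset.sum_congr rfl fun j _ => ?_
        rw [Matrix.sub_apply, hMO' p j]
        rfl
      · refine Finset.sum_congr rfl fun p _ => Finset.sum_congr rfl fun s hs =>
          Finset.sum_congr rfl fun j _ => ?_
        rw [Matrix.sub_apply, Matrix.sub_apply, hMO'ne p (s, j) (Finset.ne_of_mem_erase hs)]
    have e2 : (∑ p, ∑ q, ((L - M * P) p q)^2)
        = (∑ p, ∑ j, (D p j - (C * Pt) p j)^2)
          + ∑ p, ∑ s ∈ Finset.univ.erase t, ∑ j, ((L - M * P) p (s, j))^2 := by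
      rw [hdec]
      congr 1
      refine Finset.sum_congr rfl fun p _ => Finset.sum_congr rfl fun j _ => ?_
      rw [Matrix.sub_apply, hMP p j]
      rfl
    rw [e1, e2, add_le_add_iff_right] at hssq
    rw [sum_sq_sub, sum_sq_sub] at hssq
    have horth : (∑ p, ∑ j, (((C * Pt) * Q) p j)^2) = ∑ p, ∑ j, ((C * Pt) p j)^2 :=
      ssq_mul_orth (C * Pt) Q hQ
    have htr1 : ((C * Pt)ᵀ * D).trace = B.trace := by rw [hBdef]
    have htr2 : (((C * Pt) * Q)ᵀ * D).trace = (Qᵀ * B).trace := by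
      rw [transpose_mul, Matrix.mul_assoc, hBdef]
    rw [horth, htr1, htr2] at hssq
    linarith
  -- consequences for B
  have hq : ∀ x, 0 ≤ x ⬝ᵥ B.mulVec x := psd_of_trace_opt B hkey
  have hsym : Bᵀ = B := symm_of_trace_opt B hkey
  have hGsym : Gᵀ = G := by rw [hGdef, transpose_mul, transpose_transpose]
  have hGq : ∀ x, 0 ≤ x ⬝ᵥ G.mulVec x := by
    intro x
    rw [hGdef, ← Matrix.mulVec_mulVec, Matrix.dotProduct_mulVec, Matrix.vecMul_transpose]
    exact dp_self_nonneg _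
  have hGD : ∀ x, G *ᵥ x = 0 ↔ D *ᵥ x = 0 := by
    intro x
    constructor
    · intro hx
      have h0 : x ⬝ᵥ G *ᵥ x = 0 := by rw [hx]; simp
      rw [hGdef, ← Matrix.mulVec_mulVec, Matrix.dotProduct_mulVec,
        Matrix.vecMul_transpose] at h0
      exact dotProduct_self_eq_zero.mp h0
    · intro hx
      rw [hGdef, ← Matrix.mulVec_mulVec, hx, Matrix.mulVec_zero]
  constructor
  · rintro u ⟨hu0, hu1⟩
    rw [hblk u]
    refine Matrix.PosSemidef.of_dotProduct_mulVec_nonneg ?_ ?_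
    · show ((1 - u) • G + u • B)ᴴ = (1 - u) • G + u • B
      rw [conjTranspose_eq_transpose_of_trivial, transpose_add, transpose_smul,
        transpose_smul, hGsym, hsym]
    · intro x
      have hstar : star x = x := funext fun i => star_trivial _
      rw [hstar, Matrix.add_mulVec, Matrix.smul_mulVec, Matrix.smul_mulVec,
        dotProduct_add, dotProduct_smul, dotProduct_smul]
      simp only [smul_eq_mul]
      nlinarith [hGq x, hq x]
  · rintro u ⟨hu0, hu1⟩
    rw [hblk u, hGblk]
    apply rank_eq_of_ker_eq
    ext x
    simp only [LinearMap.mem_ker, Matrix.mulVecLin_apply]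
    constructor
    · intro hx
      have hq0 : x ⬝ᵥ ((1 - u) • G + u • B) *ᵥ x = 0 := by rw [hx]; simp
      rw [Matrix.add_mulVec, Matrix.smul_mulVec, Matrix.smul_mulVec,
        dotProduct_add, dotProduct_smul, dotProduct_smul] at hq0
      simp only [smul_eq_mul] at hq0
      have h1u : 0 < 1 - u := by linarith
      have hGx0 : x ⬝ᵥ G *ᵥ x = 0 := by nlinarith [hGq x, hq x]
      have hDx : D *ᵥ x = 0 := by
        rw [hGdef, ← Matrix.mulVec_mulVec, Matrix.dotProduct_mulVec,
          Matrix.vecMul_transpose] at hGx0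
        exact dotProduct_self_eq_zero.mp hGx0
      rw [hGdef, ← Matrix.mulVec_mulVec, hDx, Matrix.mulVec_zero]
    · intro hx
      have hDx : D *ᵥ x = 0 := (hGD x).mp hx
      have hBx : B *ᵥ x = 0 := by
        rw [hBdef, ← Matrix.mulVec_mulVec, hDx, Matrix.mulVec_zero]
      rw [Matrix.add_mulVec, Matrix.smul_mulVec, Matrix.smul_mulVec, hx, hBx]
      simp
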